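/- Let f, g : ℝ → ℝ be 1-periodic functions of bounded variation on [0,1], and define G(x) = ∫₀¹ f(u) g(u + x) du. Then G is of bounded variation on [0,1] with total variation V(G) ≤ V(g) · ‖f‖_{L¹([0,1])}. -/

import Mathlib

open MeasureTheory


/-- a measurable function bounded on `[0,1]` is interval integrable on `[0,1]`. -/
lemma intInt_of_bdd {F : ℝ → ℝ} (hm : Measurable F) {C : ℝ}
    (hb : ∀ u ∈ Set.Icc (0:ℝ) 1, |F u| ≤ C) : IntervalIntegrable F volume 0 1 := by
  rw [intervalIntegrable_iff_integrableOn_Ioc_of_le (by norm_num)]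
  refine Integrable.mono' (integrable_const C) hm.aestronglyMeasurable ?_
  filter_upwards [ae_restrict_mem measurableSet_Ioc] with u hu
  exact hb u ⟨hu.1.le, hu.2⟩

/-- variation is translation invariant for a `1`-periodic function. -/
lemma evar_shift {g : ℝ → ℝ} (hgp : Function.Periodic g 1) (a b : ℝ) :
    eVariationOn g (Set.Icc (a+1) (b+1)) = eVariationOn g (Set.Icc a b) := by
  have h1 : g ∘ (fun x : ℝ => x + 1) = g := funext fun x => hgp x
  have h2 := eVariationOn.comp_eq_of_monotoneOn g (t := Set.Icc a b)
    (fun x : ℝ => x + 1) (fun x _ y _ hxy => by simpa using hxy)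
  rw [h1] at h2
  rw [h2, Set.image_add_const_Icc]

lemma evar_period {g : ℝ → ℝ} (hgp : Function.Periodic g 1) {u : ℝ}
    (hu : u ∈ Set.Icc (0:ℝ) 1) :
    eVariationOn g (Set.Icc u (u+1)) = eVariationOn g (Set.Icc 0 1) := by
  have h1 := eVariationOn.Icc_add_Icc g (s := (Set.univ : Set ℝ)) hu.2
    (by linarith [hu.1] : (1:ℝ) ≤ u + 1) (Set.mem_univ 1)
  have h2 := eVariationOn.Icc_add_Icc g (s := (Set.univ : Set ℝ)) hu.1 hu.2 (Set.mem_univ u)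
  simp only [Set.univ_inter] at h1 h2
  have h3 : eVariationOn g (Set.Icc (1:ℝ) (u+1)) = eVariationOn g (Set.Icc 0 u) := by
    have := evar_shift hgp 0 u; simpa using this
  rw [h3] at h1
  rw [← h1, ← h2, add_comm]

lemma bdd_of_BV {h : ℝ → ℝ} (hBV : BoundedVariationOn h (Set.Icc 0 1)) :
    ∀ u ∈ Set.Icc (0:ℝ) 1, |h u| ≤ |h 0| + (eVariationOn h (Set.Icc 0 1)).toReal := by
  intro u hu
  have h0 : (0:ℝ) ∈ Set.Icc (0:ℝ) 1 := ⟨le_rfl, by norm_num⟩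
  have hed := eVariationOn.edist_le h hu h0
  rw [edist_dist] at hed
  have hd : dist (h u) (h 0) ≤ (eVariationOn h (Set.Icc 0 1)).toReal :=
    (ENNReal.ofReal_le_iff_le_toReal hBV).mp hed
  rw [Real.dist_eq] at hd
  calc |h u| = |h 0 + (h u - h 0)| := by ring_nf
    _ ≤ |h 0| + |h u - h 0| := abs_add_le _ _
    _ ≤ |h 0| + (eVariationOn h (Set.Icc 0 1)).toReal := by linarith

lemma bdd_global {h : ℝ → ℝ} (hp : Function.Periodic h 1)
    (hBV : BoundedVariationOn h (Set.Icc 0 1)) :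
    ∀ t : ℝ, |h t| ≤ |h 0| + (eVariationOn h (Set.Icc 0 1)).toReal := by
  intro t
  have h1 : h (t - (⌊t⌋ : ℝ) * 1) = h t := hp.sub_int_mul_eq ⌊t⌋
  have h2 : t - (⌊t⌋ : ℝ) * 1 ∈ Set.Icc (0:ℝ) 1 := by
    constructor
    · have := Int.floor_le t; linarith
    · have := Int.lt_floor_add_one t; linarith
  calc |h t| = |h (t - (⌊t⌋ : ℝ) * 1)| := by rw [h1]
    _ ≤ _ := bdd_of_BV hBV _ h2

/-- If `f, g : ℝ → ℝ` are `1`-periodic and of bounded variation on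
`[0,1]`, then `G(x) = ∫₀¹ f(u) g(u+x) du` has bounded variation on `[0,1]` with
`V(G) ≤ V(g) · ‖f‖_{L¹([0,1])}`. -/
theorem stmt6
    (f g : ℝ → ℝ) (hfp : Function.Periodic f 1) (hgp : Function.Periodic g 1)
    (hfm : Measurable f) (hgm : Measurable g)
    (hfBV : BoundedVariationOn f (Set.Icc 0 1))
    (hgBV : BoundedVariationOn g (Set.Icc 0 1))
    (G : ℝ → ℝ) (hG : ∀ x, G x = ∫ u in (0:ℝ)..1, f u * g (u + x)) :
    eVariationOn G (Set.Icc 0 1) ≤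
      eVariationOn g (Set.Icc 0 1) * ENNReal.ofReal (∫ u in (0:ℝ)..1, |f u|) := by
  have h01 : (0:ℝ) ≤ 1 := by norm_num
  set Vg : ℝ := (eVariationOn g (Set.Icc 0 1)).toReal with hVgdef
  have hVgnn : 0 ≤ Vg := ENNReal.toReal_nonneg
  set Mf : ℝ := |f 0| + (eVariationOn f (Set.Icc 0 1)).toReal with hMfdef
  set Mg : ℝ := |g 0| + Vg with hMgdef
  have hMf0 : 0 ≤ Mf := add_nonneg (abs_nonneg _) ENNReal.toReal_nonneg
  have hMg0 : 0 ≤ Mg := add_nonneg (abs_nonneg _) hVgnn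
  have hfb : ∀ u ∈ Set.Icc (0:ℝ) 1, |f u| ≤ Mf := bdd_of_BV hfBV
  have hgb : ∀ t : ℝ, |g t| ≤ Mg := bdd_global hgp hgBV
  -- integrability of the basic integrand
  have hintA : ∀ x : ℝ, IntervalIntegrable (fun t => f t * g (t + x)) volume 0 1 := by
    intro x
    refine intInt_of_bdd (hfm.mul (hgm.comp (measurable_add_const x))) (C := Mf * Mg) ?_
    intro t ht
    rw [abs_mul]
    exact mul_le_mul (hfb t ht) (hgb _) (abs_nonneg _) hMf0
  -- per-pair bound
  have keyi : ∀ x ∈ Set.Icc (0:ℝ) 1, ∀ y ∈ Set.Icc (0:ℝ) 1,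
      |G x - G y| ≤ ∫ t in (0:ℝ)..1, |f t| * |g (t + x) - g (t + y)| := by
    intro x _ y _
    rw [hG x, hG y, ← intervalIntegral.integral_sub (hintA x) (hintA y)]
    refine le_trans (intervalIntegral.abs_integral_le_integral_abs h01) ?_
    refine le_of_eq (intervalIntegral.integral_congr fun t _ => ?_)
    rw [← mul_sub, abs_mul]
  refine iSup_le ?_
  rintro ⟨n, u, hu, us⟩
  -- pointwise variation sum bound
  have sumB : ∀ t ∈ Set.Icc (0:ℝ) 1,
      ∑ i ∈ Finset.range n, |g (t + u (i+1)) - g (t + u i)| ≤ Vg := by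
    intro t ht
    have mono : Monotone (fun i => t + u i) := fun i j hij => by
      have := hu hij; simpa using this
    have mem : ∀ i, t + u i ∈ Set.Icc t (t+1) := fun i =>
      ⟨by linarith [(us i).1], by linarith [(us i).2]⟩
    have h := eVariationOn.sum_le (f := g) (n := n) mono mem
    rw [evar_period hgp ht] at h
    have h2 : ENNReal.ofReal (∑ i ∈ Finset.range n, |g (t + u (i+1)) - g (t + u i)|)
        ≤ eVariationOn g (Set.Icc 0 1) := by
      rw [ENNReal.ofReal_sum_of_nonneg (fun i _ => abs_nonneg _)]
      refine le_trans (le_of_eq (Finset.sum_congr rfl fun i _ => ?_)) h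
      rw [edist_dist, Real.dist_eq]
    exact (ENNReal.ofReal_le_iff_le_toReal hgBV).mp h2
  -- integrability of auxiliary functions
  have hintB : ∀ i : ℕ, IntervalIntegrable
      (fun t => |f t| * |g (t + u (i+1)) - g (t + u i)|) volume 0 1 := by
    intro i
    refine intInt_of_bdd (hfm.abs.mul ((hgm.comp (measurable_add_const _)).sub
      (hgm.comp (measurable_add_const _))).abs) (C := Mf * (Mg + Mg)) ?_
    intro t ht
    rw [abs_of_nonneg (mul_nonneg (abs_nonneg _) (abs_nonneg _))]
    refine mul_le_mul (hfb t ht) ?_ (abs_nonneg _) hMf0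
    calc |g (t + u (i+1)) - g (t + u i)| ≤ |g (t + u (i+1))| + |g (t + u i)| := abs_sub _ _
      _ ≤ Mg + Mg := add_le_add (hgb _) (hgb _)
  have hintSum : IntervalIntegrable
      (fun t => ∑ i ∈ Finset.range n, |f t| * |g (t + u (i+1)) - g (t + u i)|)
      volume 0 1 := by
    refine intInt_of_bdd (Finset.measurable_sum _ fun i _ =>
      hfm.abs.mul ((hgm.comp (measurable_add_const _)).sub
      (hgm.comp (measurable_add_const _))).abs) (C := Mf * Vg) ?_
    intro t ht
    rw [abs_of_nonneg (Finset.sum_nonneg fun i _ => mul_nonneg (abs_nonneg _) (abs_nonneg _)),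
      ← Finset.mul_sum]
    exact mul_le_mul (hfb t ht)
      (sumB t ht) (Finset.sum_nonneg fun i _ => abs_nonneg _) hMf0
  have hintD : IntervalIntegrable (fun t => |f t| * Vg) volume 0 1 := by
    refine intInt_of_bdd (hfm.abs.mul_const Vg) (C := Mf * Vg) ?_
    intro t ht
    rw [abs_of_nonneg (mul_nonneg (abs_nonneg _) hVgnn)]
    exact mul_le_mul_of_nonneg_right (hfb t ht) hVgnn
  -- the main real inequality
  have main_real : ∑ i ∈ Finset.range n, |G (u (i+1)) - G (u i)|
      ≤ Vg * ∫ t in (0:ℝ)..1, |f t| := by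
    calc ∑ i ∈ Finset.range n, |G (u (i+1)) - G (u i)|
        ≤ ∑ i ∈ Finset.range n, ∫ t in (0:ℝ)..1, |f t| * |g (t + u (i+1)) - g (t + u i)| :=
          Finset.sum_le_sum fun i _ => keyi _ (us _) _ (us _)
      _ = ∫ t in (0:ℝ)..1, ∑ i ∈ Finset.range n, |f t| * |g (t + u (i+1)) - g (t + u i)| :=
          (intervalIntegral.integral_finset_sum fun i _ => hintB i).symm
      _ ≤ ∫ t in (0:ℝ)..1, |f t| * Vg := by
          refine intervalIntegral.integral_mono_on h01 hintSum hintD ?_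
          intro t ht
          rw [← Finset.mul_sum]
          exact mul_le_mul_of_nonneg_left (sumB t ht) (abs_nonneg _)
      _ = Vg * ∫ t in (0:ℝ)..1, |f t| := by
          rw [intervalIntegral.integral_mul_const, mul_comm]
  calc ∑ i ∈ Finset.range n, edist (G (u (i+1))) (G (u i))
      = ENNReal.ofReal (∑ i ∈ Finset.range n, |G (u (i+1)) - G (u i)|) := by
        rw [ENNReal.ofReal_sum_of_nonneg (fun i _ => abs_nonneg _)]
        exact Finset.sum_congr rfl fun i _ => by rw [edist_dist, Real.dist_eq]
    _ ≤ ENNReal.ofReal (Vg * ∫ t in (0:ℝ)..1, |f t|) := ENNReal.ofReal_le_ofReal main_real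
    _ = eVariationOn g (Set.Icc 0 1) * ENNReal.ofReal (∫ t in (0:ℝ)..1, |f t|) := by
        rw [ENNReal.ofReal_mul hVgnn, hVgdef, ENNReal.ofReal_toReal hgBV]
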